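/- arXiv:2409.17911 — 3 statements merged into one kernel-verified Lean document; each statement's English description precedes it below -/
import Mathlib

section
/- For Hermitian positive definite matrices X and Y of the same size, tr(Y⁻¹X + X⁻¹Y − 2I) ≥ 0, with equality if and only if X = Y. -/
open Matrix
open scoped ComplexOrder

private lemma posDef_conj {n : Type*} [Fintype n] [DecidableEq n]
    {A : Matrix n n ℂ} (hA : A.PosDef) {B : Matrix n n ℂ} (hB : IsUnit B) :
    (Bᴴ * A * B).PosDef := by
  have hinj : Function.Injective (B.mulVec) := Matrix.mulVec_injective_iff_isUnit.mpr hB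
  exact hA.conjTranspose_mul_mul_same hinj

theorem stmt2 {N : ℕ} (X Y : Matrix (Fin N) (Fin N) ℂ)
    (hX : X.PosDef) (hY : Y.PosDef) :
    0 ≤ (Y⁻¹ * X + X⁻¹ * Y - (2 : ℂ) • (1 : Matrix (Fin N) (Fin N) ℂ)).trace.re ∧
      ((Y⁻¹ * X + X⁻¹ * Y - (2 : ℂ) • (1 : Matrix (Fin N) (Fin N) ℂ)).trace = 0 ↔ X = Y) := by
  classical
  have hSex : ∃ S : Matrix (Fin N) (Fin N) ℂ, S.IsHermitian ∧ S * S = X := by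
    open scoped MatrixOrder in
    exact ⟨CFC.sqrt X, (CFC.sqrt_nonneg X).posSemidef.1,
      CFC.sqrt_mul_sqrt_self X hX.posSemidef.nonneg⟩
  obtain ⟨S, hSH, hSS⟩ := hSex
  have hYdet : IsUnit Y.det := hY.det_pos.ne'.isUnit
  have hSdet : IsUnit S.det := by
    have h1 : IsUnit (S.det * S.det) := by
      rw [← Matrix.det_mul, hSS]; exact hX.det_pos.ne'.isUnit
    exact (IsUnit.mul_iff.mp h1).1
  have hSunit : IsUnit S := (Matrix.isUnit_iff_isUnit_det _).mpr hSdet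
  have hSinv : S * S⁻¹ = 1 := Matrix.mul_nonsing_inv _ hSdet
  have hSinv' : S⁻¹ * S = 1 := Matrix.nonsing_inv_mul _ hSdet
  -- the positive definite matrix M = S Y⁻¹ S
  set M := S * Y⁻¹ * S with hMdef
  have hM : M.PosDef := by
    have := posDef_conj hY.inv hSunit
    rwa [hSH.eq] at this
  have h := hM.1
  set μ := h.eigenvalues with hμdef
  have hμpos : ∀ i, 0 < μ i := hM.eigenvalues_pos
  set U : Matrix (Fin N) (Fin N) ℂ := (h.eigenvectorUnitary : Matrix (Fin N) (Fin N) ℂ)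
    with hUdef
  have hU1 : U * star U = 1 := Matrix.mem_unitaryGroup_iff.mp h.eigenvectorUnitary.2
  have hU2 : star U * U = 1 := Matrix.mem_unitaryGroup_iff'.mp h.eigenvectorUnitary.2
  set D : Matrix (Fin N) (Fin N) ℂ := diagonal (Complex.ofReal ∘ μ) with hDdef
  have hspec : M = U * D * star U := by
    conv_lhs => rw [h.spectral_theorem]
    rw [← Unitary.coe_star]
    rfl
  set D' : Matrix (Fin N) (Fin N) ℂ := diagonal (Complex.ofReal ∘ fun i => (μ i)⁻¹) with hD'def
  have hDD' : D * D' = 1 := by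
    rw [hDdef, hD'def, diagonal_mul_diagonal]
    have e : (fun i => (Complex.ofReal ∘ μ) i * (Complex.ofReal ∘ fun j => (μ j)⁻¹) i)
        = fun _ => (1 : ℂ) := by
      funext i
      simp only [Function.comp_apply, ← Complex.ofReal_mul,
        mul_inv_cancel₀ (hμpos i).ne', Complex.ofReal_one]
    rw [e]
    exact Matrix.diagonal_one
  have htrU : ∀ (A : Matrix (Fin N) (Fin N) ℂ), (U * A * star U).trace = A.trace := by
    intro A
    rw [Matrix.trace_mul_comm, ← mul_assoc, hU2, one_mul]
  have hMinv : M⁻¹ = U * D' * star U := by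
    apply Matrix.inv_eq_right_inv
    rw [hspec]
    calc U * D * star U * (U * D' * star U)
        = U * D * (star U * U) * D' * star U := by simp only [mul_assoc]
      _ = U * (D * D') * star U := by rw [hU2, mul_one]; simp only [mul_assoc]
      _ = 1 := by rw [hDD', mul_one, hU1]
  have htrM : M.trace = ∑ i, (μ i : ℂ) := by
    conv_lhs => rw [hspec]
    rw [htrU, hDdef, Matrix.trace_diagonal]
    rfl
  have htrMinv : M⁻¹.trace = ∑ i, ((μ i : ℂ))⁻¹ := by
    rw [hMinv, htrU, hD'def, Matrix.trace_diagonal]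
    simp [Complex.ofReal_inv]
  have hM_inv_eq : M⁻¹ = S⁻¹ * Y * S⁻¹ := by
    rw [hMdef, Matrix.mul_inv_rev, Matrix.mul_inv_rev,
      Matrix.nonsing_inv_nonsing_inv Y hYdet, mul_assoc]
  have h1 : (Y⁻¹ * X).trace = M.trace := by
    rw [← hSS, ← mul_assoc, Matrix.trace_mul_comm, ← mul_assoc]
  have h2 : (X⁻¹ * Y).trace = M⁻¹.trace := by
    rw [← hSS, Matrix.mul_inv_rev, mul_assoc, Matrix.trace_mul_comm, hM_inv_eq]
  -- the trace as a real number
  set r : ℝ := ∑ i, (μ i + (μ i)⁻¹ - 2) with hrdef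
  have htr : (Y⁻¹ * X + X⁻¹ * Y - (2 : ℂ) • (1 : Matrix (Fin N) (Fin N) ℂ)).trace = (r : ℂ) := by
    rw [Matrix.trace_sub, Matrix.trace_add, Matrix.trace_smul, Matrix.trace_one,
      h1, h2, htrM, htrMinv, hrdef]
    push_cast [Finset.sum_sub_distrib, Finset.sum_add_distrib, Finset.sum_const,
      Finset.card_univ, smul_eq_mul, nsmul_eq_mul]
    ring
  have hterm_nonneg : ∀ i ∈ Finset.univ, 0 ≤ μ i + (μ i)⁻¹ - 2 := by
    intro i _
    have hm := hμpos i
    nlinarith [sq_nonneg (μ i - 1), mul_inv_cancel₀ hm.ne', hm, inv_pos.mpr hm]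
  have hr_nonneg : 0 ≤ r := Finset.sum_nonneg hterm_nonneg
  constructor
  · rw [htr, Complex.ofReal_re]
    exact hr_nonneg
  constructor
  · -- trace = 0 → X = Y
    intro h0
    rw [htr, Complex.ofReal_eq_zero] at h0
    have hall : ∀ i, μ i = 1 := by
      intro i
      have hzero := (Finset.sum_eq_zero_iff_of_nonneg hterm_nonneg).mp h0 i
        (Finset.mem_univ i)
      have hm := hμpos i
      have h' : μ i * (μ i)⁻¹ = 1 := mul_inv_cancel₀ hm.ne'
      have hsq : (μ i - 1) ^ 2 = 0 := by linear_combination μ i * hzero - h'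
      have := sq_eq_zero_iff.mp hsq
      linarith
    have hD1 : D = 1 := by
      rw [hDdef]
      have e : Complex.ofReal ∘ μ = fun _ => (1 : ℂ) := by
        funext i
        simp [hall i]
      rw [e]
      exact Matrix.diagonal_one
    have hM1 : M = 1 := by rw [hspec, hD1, mul_one, hU1]
    have hYX : S⁻¹ * Y * S⁻¹ = 1 := by rw [← hM_inv_eq, hM1, inv_one]
    have key : S * (S⁻¹ * Y * S⁻¹) * S = Y := by
      calc S * (S⁻¹ * Y * S⁻¹) * S = (S * S⁻¹) * Y * (S⁻¹ * S) := by
            simp only [mul_assoc]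
        _ = Y := by rw [hSinv, hSinv', one_mul, mul_one]
    rw [← key, hYX, mul_one, hSS]
  · -- X = Y → trace = 0
    intro hXY
    subst hXY
    rw [Matrix.nonsing_inv_mul _ hYdet]
    simp [two_smul]
end

section
/- For Hermitian positive definite matrices X and Y of the same size, ln det((X+Y)/2) − (1/2) ln det(XY) ≥ 0, with equality if and only if X = Y. -/
open Matrix
open scoped ComplexOrder

private lemma agm_step {t : ℝ} (ht : 0 < t) :
    0 ≤ Real.log ((1 + t) / 2) - (1/2) * Real.log t ∧
      (Real.log ((1 + t) / 2) - (1/2) * Real.log t = 0 ↔ t = 1) := by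
  have h2 : (0:ℝ) < (1 + t) / 2 := by linarith
  have hsq : Real.sqrt t ^ 2 = t := Real.sq_sqrt ht.le
  have hs : 0 < Real.sqrt t := Real.sqrt_pos.mpr ht
  have key : Real.sqrt t ≤ (1 + t) / 2 := by nlinarith [sq_nonneg (Real.sqrt t - 1)]
  have hlog : Real.log (Real.sqrt t) = (1/2) * Real.log t := by
    rw [Real.log_sqrt ht.le]; ring
  refine ⟨by linarith [hlog ▸ Real.log_le_log hs key], ?_, ?_⟩
  · intro h
    have h1 : Real.log ((1+t)/2) = Real.log (Real.sqrt t) := by rw [hlog]; linarith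
    have heq : (1+t)/2 = Real.sqrt t :=
      Real.log_injOn_pos (Set.mem_Ioi.mpr h2) (Set.mem_Ioi.mpr hs) h1
    have hz : (t - 1)^2 = 0 := by nlinarith
    have := pow_eq_zero_iff (n := 2) (by norm_num) |>.mp hz
    linarith [this]
  · rintro rfl; norm_num

theorem stmt3 {N : ℕ} (X Y : Matrix (Fin N) (Fin N) ℂ)
    (hX : X.PosDef) (hY : Y.PosDef) :
    0 ≤ Real.log (((2 : ℂ)⁻¹ • (X + Y)).det.re) - (1 / 2) * Real.log ((X * Y).det.re) ∧
      (Real.log (((2 : ℂ)⁻¹ • (X + Y)).det.re) - (1 / 2) * Real.log ((X * Y).det.re) = 0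
        ↔ X = Y) := by
  classical
  open scoped MatrixOrder in
  set S := CFC.sqrt X with hSdef
  open scoped MatrixOrder in
  have hSH : S.IsHermitian := (CFC.sqrt_nonneg X).posSemidef.1
  open scoped MatrixOrder in
  have hSS : S * S = X := CFC.sqrt_mul_sqrt_self X hX.posSemidef.nonneg
  have hdetX : IsUnit X.det := hX.det_pos.ne'.isUnit
  have hdetSS : S.det * S.det = X.det := by rw [← det_mul, hSS]
  have hdetS : IsUnit S.det := isUnit_of_mul_isUnit_left (hdetSS ▸ hdetX)
  have hSinv : S * S⁻¹ = 1 := mul_nonsing_inv S hdetS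
  have hSinv' : S⁻¹ * S = 1 := nonsing_inv_mul S hdetS
  have hSinvH : (S⁻¹).IsHermitian := hSH.inv
  set Z := S⁻¹ * Y * S⁻¹ with hZdef
  have hZ : Z.PosDef := by
    refine PosDef.of_dotProduct_mulVec_pos ?_ ?_
    · show Zᴴ = Z
      rw [hZdef, conjTranspose_mul, conjTranspose_mul, hSinvH.eq, hY.1.eq, mul_assoc]
    · intro x hx
      have hx' : S⁻¹ *ᵥ x ≠ 0 := by
        intro h
        apply hx
        have : S *ᵥ (S⁻¹ *ᵥ x) = x := by rw [mulVec_mulVec, hSinv, one_mulVec]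
        rw [h, mulVec_zero] at this
        exact this.symm
      have := hY.dotProduct_mulVec_pos hx'
      rwa [star_mulVec, hSinvH.eq, ← dotProduct_mulVec, mulVec_mulVec, mulVec_mulVec] at this
  have hSZS : S * Z * S = Y := by
    rw [hZdef]
    simp only [mul_assoc, hSinv', mul_one]
    simp only [← mul_assoc, hSinv, one_mul]
  have hXY : X + Y = S * (1 + Z) * S := by
    rw [mul_add, add_mul, mul_one, hSS, hSZS]
  set μ := hZ.1.eigenvalues with hμdef
  have hμpos : ∀ i, 0 < μ i := hZ.eigenvalues_pos
  have hdetZ : Z.det = ∏ i, (μ i : ℂ) := hZ.1.det_eq_prod_eigenvalues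
  set U := (hZ.1.eigenvectorUnitary : Matrix (Fin N) (Fin N) ℂ) with hUdef
  have hU : U * star U = 1 := (Matrix.mem_unitaryGroup_iff).mp hZ.1.eigenvectorUnitary.2
  have hU' : star U * U = 1 := (Matrix.mem_unitaryGroup_iff').mp hZ.1.eigenvectorUnitary.2
  have spec : Z = U * diagonal (RCLike.ofReal ∘ μ) * star U := hZ.1.spectral_theorem
  have h1Z : (1 + Z).det = ∏ i, ((1 : ℂ) + (μ i : ℂ)) := by
    have h1 : (1 : Matrix (Fin N) (Fin N) ℂ) + Z
        = U * (1 + diagonal (RCLike.ofReal ∘ μ)) * star U := by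
      rw [mul_add, add_mul, mul_one, hU, spec]
    rw [h1, det_mul, det_mul, mul_comm, ← mul_assoc, ← det_mul, ← det_mul, hU', one_mul]
    rw [show (1 : Matrix (Fin N) (Fin N) ℂ) + diagonal (RCLike.ofReal ∘ μ)
        = diagonal (fun i => 1 + (μ i : ℂ)) by rw [← diagonal_one, diagonal_add]; rfl]
    rw [det_diagonal]
  have hXd : X.det.im = 0 ∧ 0 < X.det.re := by
    have := hX.det_pos
    rw [Complex.lt_def] at this
    exact ⟨this.2.symm.trans (by simp), by simpa using this.1⟩
  set da : ℝ := X.det.re with hdadef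
  have hda : X.det = (da : ℂ) := Complex.ext (by simp [hdadef]) (by simp [hXd.1])
  have hdapos : 0 < da := hXd.2
  have hdetY : Y.det = X.det * Z.det := by
    rw [← hSZS, det_mul, det_mul, mul_right_comm, hdetSS]
  have hp : ∏ i, ((1:ℂ) + (μ i : ℂ))/2 = (2:ℂ)⁻¹ ^ N * ∏ i, ((1:ℂ) + (μ i : ℂ)) := by
    rw [Finset.prod_div_distrib, Finset.prod_const, Finset.card_univ, Fintype.card_fin,
      div_eq_inv_mul, inv_pow]
  have hT1 : ((2:ℂ)⁻¹ • (X + Y)).det = ((da * ∏ i, ((1 + μ i)/2) : ℝ) : ℂ) := by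
    rw [det_smul, Fintype.card_fin, hXY, det_mul, det_mul, mul_right_comm, hdetSS, hda, h1Z]
    push_cast
    rw [hp]
    ring
  have hT2 : (X * Y).det = ((da * (da * ∏ i, μ i) : ℝ) : ℂ) := by
    rw [det_mul, hdetY, hdetZ, hda]
    push_cast
    ring
  have hP : 0 < ∏ i, ((1 + μ i)/2) := Finset.prod_pos fun i _ => by linarith [hμpos i]
  have hQ : 0 < ∏ i, μ i := Finset.prod_pos fun i _ => hμpos i
  have hE : Real.log (((2 : ℂ)⁻¹ • (X + Y)).det.re) - (1 / 2) * Real.log ((X * Y).det.re)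
      = ∑ i, (Real.log ((1 + μ i)/2) - (1/2) * Real.log (μ i)) := by
    rw [hT1, hT2, Complex.ofReal_re, Complex.ofReal_re,
      Real.log_mul hdapos.ne' hP.ne', Real.log_mul hdapos.ne' (by positivity),
      Real.log_mul hdapos.ne' hQ.ne',
      Real.log_prod (fun i _ => (by linarith [hμpos i] : ((1 + μ i)/2) ≠ 0)),
      Real.log_prod (fun i _ => (hμpos i).ne'),
      Finset.sum_sub_distrib, ← Finset.mul_sum]
    ring
  rw [hE]
  refine ⟨Finset.sum_nonneg fun i _ => (agm_step (hμpos i)).1, ?_, ?_⟩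
  · intro h
    have h0 := (Finset.sum_eq_zero_iff_of_nonneg
      (fun i _ => (agm_step (hμpos i)).1)).mp h
    have hμ1 : ∀ i, μ i = 1 := fun i =>
      (agm_step (hμpos i)).2.mp (h0 i (Finset.mem_univ i))
    have hZ1 : Z = 1 := by
      rw [spec]
      have hD1 : diagonal (RCLike.ofReal ∘ μ) = (1 : Matrix (Fin N) (Fin N) ℂ) := by
        have he : (RCLike.ofReal ∘ μ : Fin N → ℂ) = fun _ => 1 := by
          funext j; simp [hμ1 j]
        rw [he]
        exact diagonal_one
      rw [hD1, mul_one, hU]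
    have : Y = X := by rw [← hSZS, hZ1, mul_one, hSS]
    exact this.symm
  · intro h
    have hZ1 : Z = 1 := by
      rw [hZdef, ← h, ← hSS, ← mul_assoc, hSinv', one_mul, hSinv]
    have hD : diagonal (RCLike.ofReal ∘ μ) = star U * Z * U := by
      rw [spec, ← mul_assoc, ← mul_assoc, hU', one_mul, mul_assoc, hU', mul_one]
    rw [hZ1, mul_one, hU'] at hD
    have hμ1 : ∀ i, μ i = 1 := by
      intro i
      have := congrFun (congrFun hD i) i
      simp only [diagonal_apply_eq, Function.comp_apply, Matrix.one_apply_eq] at this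
      exact Complex.ofReal_eq_one.mp this
    exact Finset.sum_eq_zero fun i _ => (agm_step (hμpos i)).2.mpr (hμ1 i)
end

section
/- For N×N HPD matrices X and Y and W ∈ St(M,ℂᴺ) with M ≤ N, the directional derivative of ψ(W) = ln det(Wᴴ((X+Y)/2)W) − (1/2) ln det((WᴴXW)(WᴴYW)) in the direction R ∈ ℂ^{N×M} equals ⟨G, R⟩, where G = 2(X+Y)W(WᴴXW + WᴴYW)⁻¹ − XW(WᴴXW)⁻¹ − YW(WᴴYW)⁻¹ and ⟨G,R⟩ = Re tr(GᴴR). -/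
open Matrix
open scoped ComplexOrder


private lemma entry_hasDerivAt (C0 C1 C2 : ℂ) :
    HasDerivAt (fun ε : ℝ => C0 + ε • C1 + (ε * ε) • C2) C1 0 := by
  have h1 : HasDerivAt (fun ε : ℝ => ε • C1) ((1:ℝ) • C1) 0 :=
    (hasDerivAt_id (0:ℝ)).smul_const C1
  have h2 : HasDerivAt (fun ε : ℝ => (ε * ε) • C2) (((1:ℝ) * 0 + 0 * 1) • C2) 0 :=
    ((hasDerivAt_id (0:ℝ)).mul (hasDerivAt_id (0:ℝ))).smul_const C2
  simpa using ((hasDerivAt_const (0:ℝ) C0).fun_add h1).fun_add h2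

private lemma hasDerivAt_det' {n : ℕ} (A : ℝ → Matrix (Fin n) (Fin n) ℂ)
    (A' : Matrix (Fin n) (Fin n) ℂ) (x : ℝ)
    (h : ∀ i j, HasDerivAt (fun t => A t i j) (A' i j) x) :
    HasDerivAt (fun t => (A t).det) ((adjugate (A x) * A').trace) x := by
  have hD : HasDerivAt (fun t => (A t).det)
      (∑ σ : Equiv.Perm (Fin n), ((Equiv.Perm.sign σ : ℤ) : ℂ) *
        ∑ i, (∏ j ∈ Finset.univ.erase i, A x (σ j) j) • A' (σ i) i) x := by
    simp only [Matrix.det_apply']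
    exact HasDerivAt.fun_sum fun σ _ =>
      (HasDerivAt.fun_finsetProd fun i _ => h (σ i) i).const_mul _
  convert hD using 1
  have h1 : ∀ i, (adjugate (A x) * A') i i
      = ((A x).updateCol i (fun k => A' k i)).det := by
    intro i
    rw [← cramer_apply, cramer_eq_adjugate_mulVec]
    simp [Matrix.mul_apply, Matrix.mulVec, dotProduct]
  calc (adjugate (A x) * A').trace
      = ∑ i, ((A x).updateCol i (fun k => A' k i)).det := by
        simp only [Matrix.trace, Matrix.diag]
        exact Finset.sum_congr rfl fun i _ => h1 i
    _ = ∑ i, ∑ σ : Equiv.Perm (Fin n), ((Equiv.Perm.sign σ : ℤ) : ℂ) *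
          (A' (σ i) i * ∏ j ∈ Finset.univ.erase i, A x (σ j) j) := by
        refine Finset.sum_congr rfl fun i _ => ?_
        rw [Matrix.det_apply']
        refine Finset.sum_congr rfl fun σ _ => ?_
        congr 1
        rw [← Finset.mul_prod_erase Finset.univ _ (Finset.mem_univ i)]
        congr 1
        · simp [Matrix.updateCol_apply]
        · exact Finset.prod_congr rfl fun j hj => by
            simp [Matrix.updateCol_apply, (Finset.mem_erase.mp hj).1]
    _ = _ := by
        rw [Finset.sum_comm]
        refine Finset.sum_congr rfl fun σ _ => ?_
        rw [Finset.mul_sum]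
        refine Finset.sum_congr rfl fun i _ => ?_
        rw [smul_eq_mul]; ring

private lemma hasDerivAt_det_path {n m : ℕ} (P : Matrix (Fin n) (Fin n) ℂ)
    (W R : Matrix (Fin n) (Fin m) ℂ) :
    HasDerivAt (fun ε : ℝ => ((W + ε • R)ᴴ * P * (W + ε • R)).det)
      ((adjugate (Wᴴ * P * W) * (Wᴴ * P * R + Rᴴ * P * W)).trace) 0 := by
  have hsmul : ∀ ε : ℝ, (ε • R)ᴴ = ε • Rᴴ := by
    intro ε; ext i j
    simp [Matrix.conjTranspose_apply, Matrix.smul_apply]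
  have hA : ∀ ε : ℝ, (W + ε • R)ᴴ * P * (W + ε • R)
      = Wᴴ * P * W + ε • (Wᴴ * P * R + Rᴴ * P * W) + (ε * ε) • (Rᴴ * P * R) := by
    intro ε
    rw [conjTranspose_add, hsmul]
    simp only [Matrix.add_mul, Matrix.mul_add, Matrix.smul_mul, Matrix.mul_smul, smul_smul]
    abel_nf
    module
  have h := hasDerivAt_det'
    (fun ε : ℝ => Wᴴ * P * W + ε • (Wᴴ * P * R + Rᴴ * P * W) + (ε * ε) • (Rᴴ * P * R))
    (Wᴴ * P * R + Rᴴ * P * W) 0 ?_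
  · convert h using 1
    · funext ε; rw [hA]
    · norm_num
  · intro i j
    simpa [Matrix.add_apply, Matrix.smul_apply] using
      entry_hasDerivAt ((Wᴴ * P * W) i j) ((Wᴴ * P * R + Rᴴ * P * W) i j) ((Rᴴ * P * R) i j)

open scoped ComplexOrder

private lemma posdef_conj {n m : ℕ} {P : Matrix (Fin n) (Fin n) ℂ} (hP : P.PosDef)
    {W : Matrix (Fin n) (Fin m) ℂ} (hW : Wᴴ * W = 1) : (Wᴴ * P * W).PosDef := by
  refine posDef_iff_dotProduct_mulVec.mpr ⟨?_, fun x hx => ?_⟩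
  · have h := hP.isHermitian
    unfold Matrix.IsHermitian at h ⊢
    simp only [conjTranspose_mul, conjTranspose_conjTranspose, h]
    rw [Matrix.mul_assoc]
  · have hWx : W *ᵥ x ≠ 0 := by
      intro h0
      have : (Wᴴ * W) *ᵥ x = 0 := by
        rw [← Matrix.mulVec_mulVec, h0, Matrix.mulVec_zero]
      rw [hW, Matrix.one_mulVec] at this
      exact hx this
    have h := (posDef_iff_dotProduct_mulVec.mp hP).2 hWx
    have heq : star (W *ᵥ x) ⬝ᵥ (P *ᵥ (W *ᵥ x)) = star x ⬝ᵥ ((Wᴴ * P * W) *ᵥ x) := by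
      rw [star_mulVec, Matrix.mulVec_mulVec, Matrix.dotProduct_mulVec,
        Matrix.vecMul_vecMul, ← Matrix.dotProduct_mulVec, ← Matrix.mul_assoc]
    rwa [heq] at h

private lemma posdef_half {n : ℕ} {P : Matrix (Fin n) (Fin n) ℂ} (hP : P.PosDef) :
    ((2:ℂ)⁻¹ • P).PosDef := by
  have h2 : (0:ℂ) < (2:ℂ)⁻¹ := by
    have : ((2:ℂ))⁻¹ = (((2:ℝ)⁻¹ : ℝ) : ℂ) := by norm_num
    rw [this]
    exact_mod_cast (by norm_num : (0:ℝ) < 2⁻¹)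
  refine posDef_iff_dotProduct_mulVec.mpr ⟨?_, fun x hx => ?_⟩
  · have h := hP.isHermitian
    unfold Matrix.IsHermitian at h ⊢
    rw [conjTranspose_smul, h]
    congr 1
    simp
  · have h := (posDef_iff_dotProduct_mulVec.mp hP).2 hx
    rw [Matrix.smul_mulVec, dotProduct_smul]
    calc (0:ℂ) = (2:ℂ)⁻¹ * 0 := by ring
      _ < (2:ℂ)⁻¹ * (star x ⬝ᵥ P *ᵥ x) := by
          exact mul_lt_mul_of_pos_left h h2
      _ = (2:ℂ)⁻¹ • (star x ⬝ᵥ P *ᵥ x) := by rw [smul_eq_mul]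

private lemma log_term {n m : ℕ} {P : Matrix (Fin n) (Fin n) ℂ} (hP : P.PosDef)
    (W R : Matrix (Fin n) (Fin m) ℂ) (hW : Wᴴ * W = 1) :
    HasDerivAt (fun ε : ℝ => Real.log (((W + ε • R)ᴴ * P * (W + ε • R)).det.re))
      (((Wᴴ * P * W)⁻¹ * (Wᴴ * P * R + Rᴴ * P * W)).trace.re) 0 := by
  have hQ : (Wᴴ * P * W).PosDef := posdef_conj hP hW
  have hdet := hQ.det_pos
  have hre : 0 < (Wᴴ * P * W).det.re := (Complex.lt_def.mp hdet).1
  have him : (Wᴴ * P * W).det.im = 0 := by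
    have := (Complex.lt_def.mp hdet).2; simpa using this.symm
  have hd := hasDerivAt_det_path P W R
  have hre' : HasDerivAt (fun ε : ℝ => ((W + ε • R)ᴴ * P * (W + ε • R)).det.re)
      ((adjugate (Wᴴ * P * W) * (Wᴴ * P * R + Rᴴ * P * W)).trace.re) 0 :=
    Complex.reCLM.hasFDerivAt.comp_hasDerivAt 0 hd
  have h0 : ((W + (0:ℝ) • R)ᴴ * P * (W + (0:ℝ) • R)).det.re = (Wᴴ * P * W).det.re := by
    norm_num
  have hlog := hre'.log (by rw [h0]; exact hre.ne')
  convert hlog using 1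
  rw [h0]
  have hadj : adjugate (Wᴴ * P * W) = (Wᴴ * P * W).det • (Wᴴ * P * W)⁻¹ := by
    rw [Matrix.inv_def, smul_smul, Ring.inverse_eq_inv, mul_inv_cancel₀ hdet.ne', one_smul]
  rw [hadj, Matrix.smul_mul, Matrix.trace_smul, smul_eq_mul, Complex.mul_re, him]
  field_simp
  ring

private lemma re_trace_sym {n m : ℕ} (B : Matrix (Fin m) (Fin m) ℂ) (Mh : Matrix (Fin n) (Fin n) ℂ)
    (W R : Matrix (Fin n) (Fin m) ℂ) (hB : Bᴴ = B) (hM : Mhᴴ = Mh) :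
    (B * (Wᴴ * Mh * R + Rᴴ * Mh * W)).trace.re = 2 * (B * (Wᴴ * Mh * R)).trace.re := by
  rw [Matrix.mul_add, Matrix.trace_add]
  have hct : (B * (Wᴴ * Mh * R))ᴴ = Rᴴ * Mh * W * B := by
    simp only [conjTranspose_mul, hB, hM, conjTranspose_conjTranspose, Matrix.mul_assoc]
  have hst : (B * (Rᴴ * Mh * W)).trace = star ((B * (Wᴴ * Mh * R)).trace) := by
    calc (B * (Rᴴ * Mh * W)).trace = (Rᴴ * Mh * W * B).trace := Matrix.trace_mul_comm _ _
      _ = ((B * (Wᴴ * Mh * R))ᴴ).trace := by rw [hct]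
      _ = star ((B * (Wᴴ * Mh * R)).trace) := Matrix.trace_conjTranspose _
  rw [hst]
  simp only [Complex.add_re, Complex.star_def, Complex.conj_re]
  ring

theorem stmt17 {N M : ℕ} (hMN : M ≤ N)
    (X Y : Matrix (Fin N) (Fin N) ℂ) (hX : X.PosDef) (hY : Y.PosDef)
    (W R : Matrix (Fin N) (Fin M) ℂ) (hW : Wᴴ * W = 1) :
    HasDerivAt
      (fun ε : ℝ =>
        Real.log (((W + ε • R)ᴴ * ((2 : ℂ)⁻¹ • (X + Y)) * (W + ε • R)).det.re)
          - (1 / 2) * Real.log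
              ((((W + ε • R)ᴴ * X * (W + ε • R)) * ((W + ε • R)ᴴ * Y * (W + ε • R))).det.re))
      ((((2 : ℂ) • ((X + Y) * W * (Wᴴ * X * W + Wᴴ * Y * W)⁻¹)
          - X * W * (Wᴴ * X * W)⁻¹ - Y * W * (Wᴴ * Y * W)⁻¹)ᴴ * R).trace.re)
      0 := by
  have hXY : (X + Y).PosDef := hX.add hY
  have hS : ((2:ℂ)⁻¹ • (X + Y)).PosDef := posdef_half hXY
  have hQX : (Wᴴ * X * W).PosDef := posdef_conj hX hW
  have hQY : (Wᴴ * Y * W).PosDef := posdef_conj hY hW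
  have hPm : (Wᴴ * (X + Y) * W).PosDef := posdef_conj hXY hW
  have hPsum : Wᴴ * (X + Y) * W = Wᴴ * X * W + Wᴴ * Y * W := by
    rw [Matrix.mul_add, Matrix.add_mul]
  have hdX := hQX.det_pos
  have hdY := hQY.det_pos
  have hreX : 0 < (Wᴴ * X * W).det.re := (Complex.lt_def.mp hdX).1
  have hreY : 0 < (Wᴴ * Y * W).det.re := (Complex.lt_def.mp hdY).1
  have himX : (Wᴴ * X * W).det.im = 0 := by
    have := (Complex.lt_def.mp hdX).2; simpa using this.symm
  have himY : (Wᴴ * Y * W).det.im = 0 := by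
    have := (Complex.lt_def.mp hdY).2; simpa using this.symm
  -- first summand
  have h1 := log_term hS W R hW
  -- second summand
  have hmul := (hasDerivAt_det_path X W R).mul (hasDerivAt_det_path Y W R)
  simp only [zero_smul, add_zero] at hmul
  have hre2 : HasDerivAt
      (fun ε : ℝ => (((W + ε • R)ᴴ * X * (W + ε • R)).det
        * ((W + ε • R)ᴴ * Y * (W + ε • R)).det).re)
      (((adjugate (Wᴴ * X * W) * (Wᴴ * X * R + Rᴴ * X * W)).trace * (Wᴴ * Y * W).det
        + (Wᴴ * X * W).det * (adjugate (Wᴴ * Y * W) * (Wᴴ * Y * R + Rᴴ * Y * W)).trace).re) 0 :=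
    Complex.reCLM.hasFDerivAt.comp_hasDerivAt 0 hmul
  have hprodre : ((Wᴴ * X * W).det * (Wᴴ * Y * W).det).re
      = (Wᴴ * X * W).det.re * (Wᴴ * Y * W).det.re := by
    rw [Complex.mul_re, himX]; ring
  have hne2 : (((W + (0:ℝ) • R)ᴴ * X * (W + (0:ℝ) • R)).det
      * ((W + (0:ℝ) • R)ᴴ * Y * (W + (0:ℝ) • R)).det).re ≠ 0 := by
    simp only [zero_smul, add_zero]
    rw [hprodre]
    positivity
  have hlog2 := hre2.log hne2
  have H := h1.sub (hlog2.const_mul (1/2 : ℝ))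
  simp only [Matrix.det_mul]
  refine H.congr_deriv (Eq.symm ?_)
  simp only [zero_smul, add_zero]
  rw [← hPsum]
  -- expand the target trace
  have e2 : star (2:ℂ) = 2 := by simp
  have hGexp : (((2:ℂ) • ((X + Y) * W * (Wᴴ * (X + Y) * W)⁻¹)
        - X * W * (Wᴴ * X * W)⁻¹ - Y * W * (Wᴴ * Y * W)⁻¹)ᴴ * R).trace
      = 2 * ((Wᴴ * (X + Y) * W)⁻¹ * (Wᴴ * (X + Y) * R)).trace
        - ((Wᴴ * X * W)⁻¹ * (Wᴴ * X * R)).trace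
        - ((Wᴴ * Y * W)⁻¹ * (Wᴴ * Y * R)).trace := by
    simp only [conjTranspose_sub, Matrix.conjTranspose_smul, conjTranspose_mul,
      Matrix.conjTranspose_nonsing_inv, e2, hX.isHermitian.eq, hY.isHermitian.eq,
      hXY.isHermitian.eq, hQX.isHermitian.eq, hQY.isHermitian.eq, hPm.isHermitian.eq,
      conjTranspose_conjTranspose, Matrix.sub_mul, Matrix.smul_mul,
      Matrix.trace_sub, Matrix.trace_smul, smul_eq_mul, Matrix.mul_assoc]
  rw [hGexp]
  -- simplify the first derivative value
  have hQS : Wᴴ * ((2:ℂ)⁻¹ • (X + Y)) * W = (2:ℂ)⁻¹ • (Wᴴ * (X + Y) * W) := by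
    rw [Matrix.mul_smul, Matrix.smul_mul]
  have hCS : Wᴴ * ((2:ℂ)⁻¹ • (X + Y)) * R + Rᴴ * ((2:ℂ)⁻¹ • (X + Y)) * W
      = (2:ℂ)⁻¹ • (Wᴴ * (X + Y) * R + Rᴴ * (X + Y) * W) := by
    rw [Matrix.mul_smul, Matrix.smul_mul, Matrix.mul_smul, Matrix.smul_mul, smul_add]
  have hPdet : IsUnit (Wᴴ * (X + Y) * W).det := hPm.det_pos.ne'.isUnit
  have hQSinv : ((2:ℂ)⁻¹ • (Wᴴ * (X + Y) * W))⁻¹ = (2:ℂ) • (Wᴴ * (X + Y) * W)⁻¹ := by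
    apply Matrix.inv_eq_right_inv
    rw [Matrix.smul_mul, Matrix.mul_smul, smul_smul, Matrix.mul_nonsing_inv _ hPdet]
    norm_num
  have hT1 : ((Wᴴ * ((2:ℂ)⁻¹ • (X + Y)) * W)⁻¹
        * (Wᴴ * ((2:ℂ)⁻¹ • (X + Y)) * R + Rᴴ * ((2:ℂ)⁻¹ • (X + Y)) * W)).trace
      = ((Wᴴ * (X + Y) * W)⁻¹ * (Wᴴ * (X + Y) * R + Rᴴ * (X + Y) * W)).trace := by
    rw [hQS, hCS, hQSinv, Matrix.smul_mul, Matrix.mul_smul, smul_smul]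
    norm_num
  rw [hT1]
  have hPinvH : ((Wᴴ * (X + Y) * W)⁻¹)ᴴ = (Wᴴ * (X + Y) * W)⁻¹ := hPm.inv.isHermitian.eq
  have hQXinvH : ((Wᴴ * X * W)⁻¹)ᴴ = (Wᴴ * X * W)⁻¹ := hQX.inv.isHermitian.eq
  have hQYinvH : ((Wᴴ * Y * W)⁻¹)ᴴ = (Wᴴ * Y * W)⁻¹ := hQY.inv.isHermitian.eq
  rw [re_trace_sym _ _ W R hPinvH hXY.isHermitian.eq]
  -- second derivative value
  have hadjX : adjugate (Wᴴ * X * W) = (Wᴴ * X * W).det • (Wᴴ * X * W)⁻¹ := by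
    rw [Matrix.inv_def, smul_smul, Ring.inverse_eq_inv, mul_inv_cancel₀ hdX.ne', one_smul]
  have hadjY : adjugate (Wᴴ * Y * W) = (Wᴴ * Y * W).det • (Wᴴ * Y * W)⁻¹ := by
    rw [Matrix.inv_def, smul_smul, Ring.inverse_eq_inv, mul_inv_cancel₀ hdY.ne', one_smul]
  rw [hadjX, hadjY, Matrix.smul_mul, Matrix.smul_mul, Matrix.trace_smul, Matrix.trace_smul,
    smul_eq_mul, smul_eq_mul]
  have harith : ((Wᴴ * X * W).det * ((Wᴴ * X * W)⁻¹ * (Wᴴ * X * R + Rᴴ * X * W)).trace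
        * (Wᴴ * Y * W).det
      + (Wᴴ * X * W).det * ((Wᴴ * Y * W).det
        * ((Wᴴ * Y * W)⁻¹ * (Wᴴ * Y * R + Rᴴ * Y * W)).trace)).re
      = ((Wᴴ * X * W).det.re * (Wᴴ * Y * W).det.re)
        * (((Wᴴ * X * W)⁻¹ * (Wᴴ * X * R + Rᴴ * X * W)).trace.re
          + ((Wᴴ * Y * W)⁻¹ * (Wᴴ * Y * R + Rᴴ * Y * W)).trace.re) := by
    simp only [Complex.add_re, Complex.mul_re, Complex.mul_im, himX, himY]
    ring
  rw [harith, hprodre]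
  rw [mul_div_cancel_left₀ _ (by positivity : (Wᴴ * X * W).det.re * (Wᴴ * Y * W).det.re ≠ 0)]
  rw [re_trace_sym _ _ W R hQXinvH hX.isHermitian.eq,
    re_trace_sym _ _ W R hQYinvH hY.isHermitian.eq]
  simp only [Complex.sub_re, Complex.mul_re, Complex.ofReal_re]
  norm_num
  ring
end
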